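/- Let Q* ∈ O(d) and Q ∈ O(d) with Q = Q* + Δ. Let A ∈ ℝ^{d×d} have singular value decomposition A = U D Vᵀ with Q* = U Vᵀ, and set B = A Q*ᵀ. Then ⟨A, Δ⟩ = −(1/2) ⟨B, Δ Δᵀ⟩, and consequently |⟨A, Δ⟩| ≤ (1/2) ‖A‖_* ‖Δ‖_op². -/

import Mathlib

open Matrix
set_option synthInstance.maxHeartbeats 1000000
set_option maxHeartbeats 1000000

/-- Operator (spectral) norm of a square real matrix. -/
noncomputable def opNorm {d : ℕ} (A : Matrix (Fin d) (Fin d) ℝ) : ℝ :=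
  ‖Matrix.toEuclideanCLM (𝕜 := ℝ) A‖

/-- Nuclear norm: sum of the singular values of `A`. -/
noncomputable def nuclearNorm {d : ℕ} (A : Matrix (Fin d) (Fin d) ℝ) : ℝ :=
  ∑ i, Real.sqrt ((Matrix.isHermitian_conjTranspose_mul_self A).eigenvalues i)

/-- Matrix inner product `⟨A, B⟩ = trace (Aᵀ B)`. -/
def mip {d : ℕ} (A B : Matrix (Fin d) (Fin d) ℝ) : ℝ := (Aᵀ * B).trace

-- trace of the psd sqrt is the sum of sqrt of eigenvalues
open scoped MatrixOrder in
lemma trace_psd_sqrt {n : Type*} [Fintype n] [DecidableEq n] {M : Matrix n n ℝ}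
    (hM : M.PosSemidef) :
    (CFC.sqrt M).trace = ∑ i, Real.sqrt (hM.1.eigenvalues i) := by
  rw [CFC.sqrt_eq_cfc, cfc_nnreal_eq_real _ M, hM.1.cfc_eq, IsHermitian.cfc,
    Unitary.conjStarAlgAut_apply, Matrix.trace_mul_comm, ← Matrix.mul_assoc]
  rw [Unitary.coe_star_mul_self]
  simp [Matrix.trace_diagonal, max_eq_left (hM.eigenvalues_nonneg _)]

-- opNorm of transpose
lemma opNorm_transpose {d : ℕ} (A : Matrix (Fin d) (Fin d) ℝ) : opNorm Aᵀ = opNorm A := by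
  rw [opNorm, opNorm, ← Matrix.conjTranspose_eq_transpose_of_trivial,
    ← Matrix.star_eq_conjTranspose, map_star, ContinuousLinearMap.star_eq_adjoint]
  exact LinearIsometryEquiv.norm_map ContinuousLinearMap.adjoint _

-- quadratic bound on mulVec
lemma sum_sq_mulVec_le {d : ℕ} (A : Matrix (Fin d) (Fin d) ℝ) (x : Fin d → ℝ) :
    ∑ k, (A.mulVec x k) ^ 2 ≤ opNorm A ^ 2 * ∑ j, (x j) ^ 2 := by
  have h := (Matrix.toEuclideanCLM (𝕜 := ℝ) A).le_opNorm ((WithLp.equiv 2 (Fin d → ℝ)).symm x)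
  have hx : ‖(WithLp.equiv 2 (Fin d → ℝ)).symm x‖ ^ 2 = ∑ j, (x j) ^ 2 := by
    rw [EuclideanSpace.norm_eq, Real.sq_sqrt (by positivity)]
    simp [Real.norm_eq_abs, sq_abs]
  have hAx : ‖Matrix.toEuclideanCLM (𝕜 := ℝ) A ((WithLp.equiv 2 (Fin d → ℝ)).symm x)‖ ^ 2
      = ∑ k, (A.mulVec x k) ^ 2 := by
    rw [WithLp.equiv_symm_apply, Matrix.toEuclideanCLM_toLp, EuclideanSpace.norm_eq,
      Real.sq_sqrt (by positivity)]
    simp [Real.norm_eq_abs, sq_abs, Matrix.toLin'_apply]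
  calc ∑ k, (A.mulVec x k) ^ 2
      = ‖Matrix.toEuclideanCLM (𝕜 := ℝ) A ((WithLp.equiv 2 (Fin d → ℝ)).symm x)‖ ^ 2 := hAx.symm
    _ ≤ (‖Matrix.toEuclideanCLM (𝕜 := ℝ) A‖ * ‖(WithLp.equiv 2 (Fin d → ℝ)).symm x‖) ^ 2 := by
        apply pow_le_pow_left₀ (norm_nonneg _) h
    _ = opNorm A ^ 2 * ∑ j, (x j) ^ 2 := by rw [mul_pow, opNorm, hx]

open scoped MatrixOrder in
lemma nuclearNorm_eq_sum_diag {d : ℕ} (U V D A : Matrix (Fin d) (Fin d) ℝ)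
    (hUo : Uᵀ * U = 1) (hVo : Vᵀ * V = 1)
    (hDdiag : ∀ i j, i ≠ j → D i j = 0)
    (hDpos : ∀ i, 0 ≤ D i i)
    (hA : A = U * D * Vᵀ) :
    nuclearNorm A = ∑ i, D i i := by
  have hDd : D = Matrix.diagonal (fun i => D i i) := by
    ext i j
    by_cases h : i = j
    · subst h; simp
    · simp [Matrix.diagonal, h, hDdiag i j h]
  have hDsymm : Dᵀ = D := by
    ext i j
    by_cases h : i = j
    · subst h; simp
    · simp [Matrix.transpose_apply, hDdiag i j h, hDdiag j i (Ne.symm h)]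
  have hP : (Aᴴ * A).PosSemidef := Matrix.posSemidef_conjTranspose_mul_self A
  have hSpsd : (V * D * Vᵀ).PosSemidef := by
    rw [hDd, ← Matrix.conjTranspose_eq_transpose_of_trivial V]
    exact (Matrix.posSemidef_diagonal_iff.mpr fun i => hDpos i).mul_mul_conjTranspose_same V
  have hATA : Aᴴ * A = V * D * (Uᵀ * U) * D * Vᵀ := by
    rw [Matrix.conjTranspose_eq_transpose_of_trivial, hA, Matrix.transpose_mul,
      Matrix.transpose_mul, Matrix.transpose_transpose, hDsymm]
    noncomm_ring
  have hsq : (V * D * Vᵀ) ^ 2 = Aᴴ * A := by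
    rw [hATA, hUo, pow_two,
      show V * D * Vᵀ * (V * D * Vᵀ) = V * D * (Vᵀ * V) * (D * Vᵀ) from by noncomm_ring, hVo]
    noncomm_ring
  have hsqrt : V * D * Vᵀ = CFC.sqrt (Aᴴ * A) := by
    rw [← hsq, CFC.sqrt_sq _ (Matrix.nonneg_iff_posSemidef.mpr hSpsd)]
  have h1 : (V * D * Vᵀ).trace = ∑ i, D i i := by
    rw [Matrix.trace_mul_cycle, hVo, Matrix.one_mul, hDd, Matrix.trace_diagonal]
    simp
  have h2 : nuclearNorm A = (CFC.sqrt (Aᴴ * A)).trace := by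
    rw [trace_psd_sqrt hP, nuclearNorm]
  rw [h2, ← hsqrt, h1]

/-- If `Q = Q* + Δ` with `Q, Q* ∈ O(d)`, `A = U D Vᵀ` is an SVD with `Q* = U Vᵀ`, and
`B = A Q*ᵀ`, then `⟨A, Δ⟩ = -(1/2) ⟨B, Δ Δᵀ⟩` and `|⟨A, Δ⟩| ≤ (1/2) ‖A‖_* ‖Δ‖_op²`. -/
theorem stmt1 {d : ℕ} (Qs Q Δ U V D A B : Matrix (Fin d) (Fin d) ℝ)
    (hQs : Qs ∈ Matrix.orthogonalGroup (Fin d) ℝ)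
    (hQ : Q ∈ Matrix.orthogonalGroup (Fin d) ℝ)
    (hU : U ∈ Matrix.orthogonalGroup (Fin d) ℝ)
    (hV : V ∈ Matrix.orthogonalGroup (Fin d) ℝ)
    (hDdiag : ∀ i j, i ≠ j → D i j = 0)
    (hDpos : ∀ i, 0 ≤ D i i)
    (hA : A = U * D * Vᵀ)
    (hQsdef : Qs = U * Vᵀ)
    (hDelta : Q = Qs + Δ)
    (hB : B = A * Qsᵀ) :
    mip A Δ = -(1 / 2) * mip B (Δ * Δᵀ) ∧
      |mip A Δ| ≤ (1 / 2) * nuclearNorm A * opNorm Δ ^ 2 := by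
  have tr := fun (M : Matrix (Fin d) (Fin d) ℝ) (h : M ∈ Matrix.orthogonalGroup (Fin d) ℝ) =>
    (Matrix.mem_unitaryGroup_iff' (n := Fin d) (α := ℝ)).mp h
  have tr' := fun (M : Matrix (Fin d) (Fin d) ℝ) (h : M ∈ Matrix.orthogonalGroup (Fin d) ℝ) =>
    (Matrix.mem_unitaryGroup_iff (n := Fin d) (α := ℝ)).mp h
  have hst : ∀ M : Matrix (Fin d) (Fin d) ℝ, star M = Mᵀ := fun M => by
    rw [Matrix.star_eq_conjTranspose, Matrix.conjTranspose_eq_transpose_of_trivial]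
  have hUo : Uᵀ * U = 1 := by have := tr U hU; rwa [hst] at this
  have hUo' : U * Uᵀ = 1 := by have := tr' U hU; rwa [hst] at this
  have hVo : Vᵀ * V = 1 := by have := tr V hV; rwa [hst] at this
  have hQso' : Qs * Qsᵀ = 1 := by have := tr' Qs hQs; rwa [hst] at this
  have hQo' : Q * Qᵀ = 1 := by have := tr' Q hQ; rwa [hst] at this
  have hDsymm : Dᵀ = D := by
    ext i j
    by_cases h : i = j
    · subst h; simp
    · simp [Matrix.transpose_apply, hDdiag i j h, hDdiag j i (Ne.symm h)]
  have hDd : D = Matrix.diagonal (fun i => D i i) := by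
    ext i j
    by_cases h : i = j
    · subst h; simp
    · simp [Matrix.diagonal, h, hDdiag i j h]
  -- key identity
  have key : Δ * Δᵀ = -(Qs * Δᵀ + Δ * Qsᵀ) := by
    have h1 : Q * Qᵀ = Qs * Qsᵀ + (Qs * Δᵀ + Δ * Qsᵀ + Δ * Δᵀ) := by
      rw [hDelta, Matrix.transpose_add]; noncomm_ring
    rw [hQo', hQso'] at h1
    have h2 : Qs * Δᵀ + Δ * Qsᵀ + Δ * Δᵀ = 0 := by
      have := h1.symm
      rwa [add_eq_left] at this
    exact eq_neg_of_add_eq_zero_right h2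
  have hBB : B = U * D * Uᵀ := by
    rw [hB, hA, hQsdef, Matrix.transpose_mul, Matrix.transpose_transpose,
      show U * D * Vᵀ * (V * Uᵀ) = U * D * (Vᵀ * V) * Uᵀ from by noncomm_ring, hVo]
    noncomm_ring
  have hAT : Aᵀ = V * D * Uᵀ := by
    rw [hA, Matrix.transpose_mul, Matrix.transpose_mul, Matrix.transpose_transpose, hDsymm]
    noncomm_ring
  have hBT : Bᵀ = B := by
    rw [hBB, Matrix.transpose_mul, Matrix.transpose_mul, Matrix.transpose_transpose, hDsymm]
    noncomm_ring
  have t1t : (B * (Qs * Δᵀ)).trace = (Aᵀ * Δ).trace := by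
    have t1 : B * (Qs * Δᵀ) = A * Δᵀ := by
      rw [hBB, hQsdef, hA,
        show U * D * Uᵀ * (U * Vᵀ * Δᵀ) = U * D * (Uᵀ * U) * (Vᵀ * Δᵀ) from by noncomm_ring, hUo]
      noncomm_ring
    calc (B * (Qs * Δᵀ)).trace = (A * Δᵀ).trace := by rw [t1]
      _ = ((A * Δᵀ)ᵀ).trace := (Matrix.trace_transpose _).symm
      _ = (Δ * Aᵀ).trace := by rw [Matrix.transpose_mul, Matrix.transpose_transpose]
      _ = (Aᵀ * Δ).trace := Matrix.trace_mul_comm _ _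
  have t2t : (B * (Δ * Qsᵀ)).trace = (Aᵀ * Δ).trace := by
    have hQB : Qsᵀ * B = Aᵀ := by
      rw [hQsdef, hBB, hAT, Matrix.transpose_mul, Matrix.transpose_transpose,
        show V * Uᵀ * (U * D * Uᵀ) = V * (Uᵀ * U) * (D * Uᵀ) from by noncomm_ring, hUo]
      noncomm_ring
    calc (B * (Δ * Qsᵀ)).trace = (B * Δ * Qsᵀ).trace := by rw [Matrix.mul_assoc]
      _ = (Qsᵀ * (B * Δ)).trace := (Matrix.trace_mul_comm _ _).symm
      _ = (Qsᵀ * B * Δ).trace := by rw [Matrix.mul_assoc]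
      _ = (Aᵀ * Δ).trace := by rw [hQB]
  have heq : mip B (Δ * Δᵀ) = -(2 * mip A Δ) := by
    rw [mip, hBT, key, mul_neg, Matrix.trace_neg, mul_add, Matrix.trace_add, t1t, t2t, mip]
    ring
  have e1 : mip A Δ = -(1 / 2) * mip B (Δ * Δᵀ) := by rw [heq]; ring
  refine ⟨e1, ?_⟩
  -- inequality
  have hnuc : nuclearNorm A = ∑ i, D i i := nuclearNorm_eq_sum_diag U V D A hUo hVo hDdiag hDpos hA
  set N : Matrix (Fin d) (Fin d) ℝ := Uᵀ * Δ with hN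
  have htr : mip B (Δ * Δᵀ) = ∑ i, D i i * ∑ k, (N i k) ^ 2 := by
    have hG : B * (Δ * Δᵀ) = (U * D) * (N * Nᵀ * Uᵀ) := by
      rw [hBB, hN, Matrix.transpose_mul, Matrix.transpose_transpose,
        show (U * D) * ((Uᵀ * Δ) * (Δᵀ * U) * Uᵀ) = U * D * Uᵀ * (Δ * Δᵀ * (U * Uᵀ)) from by
          noncomm_ring, hUo', Matrix.mul_one]
    have : mip B (Δ * Δᵀ) = (D * (N * Nᵀ * Uᵀ * U)).trace := by
      rw [mip, hBT, hG, Matrix.trace_mul_comm, ← Matrix.mul_assoc, Matrix.trace_mul_comm,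
        ← Matrix.mul_assoc, ← Matrix.mul_assoc]
    rw [this, Matrix.mul_assoc (N * Nᵀ), hUo, Matrix.mul_one, hDd]
    rw [Matrix.trace]
    simp only [Matrix.diag_apply, Matrix.diagonal_mul, Matrix.diagonal_apply_eq]
    congr 1
    ext i
    congr 1
    rw [Matrix.mul_apply]
    congr 1
    ext k
    rw [Matrix.transpose_apply, sq]
  have hsle : ∀ i, ∑ k, (N i k) ^ 2 ≤ opNorm Δ ^ 2 := by
    intro i
    have hrow : ∀ k, N i k = Δᵀ.mulVec (fun j => U j i) k := by
      intro k
      simp [hN, Matrix.mul_apply, Matrix.mulVec, dotProduct, Matrix.transpose_apply, mul_comm]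
    have hcol : ∑ j, (U j i) ^ 2 = 1 := by
      have h := congrFun (congrFun hUo i) i
      simpa [Matrix.mul_apply, Matrix.one_apply, Matrix.transpose_apply, sq] using h
    calc ∑ k, (N i k) ^ 2 = ∑ k, (Δᵀ.mulVec (fun j => U j i) k) ^ 2 := by simp_rw [hrow]
      _ ≤ opNorm Δᵀ ^ 2 * ∑ j, (U j i) ^ 2 := sum_sq_mulVec_le Δᵀ _
      _ = opNorm Δ ^ 2 := by rw [opNorm_transpose, hcol, mul_one]
  have hs0 : ∀ i, 0 ≤ ∑ k, (N i k) ^ 2 := fun i => Finset.sum_nonneg fun k _ => sq_nonneg _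
  have hop0 : (0:ℝ) ≤ opNorm Δ ^ 2 := sq_nonneg _
  have hbound : |mip B (Δ * Δᵀ)| ≤ (∑ i, D i i) * opNorm Δ ^ 2 := by
    rw [htr]
    calc |∑ i, D i i * ∑ k, (N i k) ^ 2| ≤ ∑ i, |D i i * ∑ k, (N i k) ^ 2| :=
        Finset.abs_sum_le_sum_abs _ _
      _ ≤ ∑ i, D i i * opNorm Δ ^ 2 := by
          apply Finset.sum_le_sum
          intro i _
          rw [abs_of_nonneg (mul_nonneg (hDpos i) (hs0 i))]
          exact mul_le_mul_of_nonneg_left (hsle i) (hDpos i)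
      _ = (∑ i, D i i) * opNorm Δ ^ 2 := (Finset.sum_mul _ _ _).symm
  rw [e1, abs_mul, hnuc]
  rw [show |(-(1/2) : ℝ)| = 1/2 by norm_num]
  calc (1/2 : ℝ) * |mip B (Δ * Δᵀ)| ≤ 1/2 * ((∑ i, D i i) * opNorm Δ ^ 2) := by linarith
    _ = 1 / 2 * (∑ i, D i i) * opNorm Δ ^ 2 := by ring
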